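/- If (X, Y) ~ Arch on the unit disk and R = √(X² + Y²), then P(R > k) = √(1 - k²) for all k ∈ [0, 1]. Equivalently, R has the distribution of √(1 - U²) for U uniform on [0,1]. -/

import Mathlib

open MeasureTheory Real
open scoped ENNReal

open Set

theorem lintegral_comp_polarCoord_symm' (g : ℝ × ℝ → ℝ≥0∞) :
    (∫⁻ p in polarCoord.target, ENNReal.ofReal p.1 * g (polarCoord.symm p)) = ∫⁻ p, g p := by
  set B : ℝ × ℝ → ℝ × ℝ →L[ℝ] ℝ × ℝ := fun p =>
    LinearMap.toContinuousLinearMap (Matrix.toLin (Module.Basis.finTwoProd ℝ) (Module.Basis.finTwoProd ℝ)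
      !![cos p.2, -p.1 * sin p.2; sin p.2, p.1 * cos p.2])
  have A : ∀ p ∈ polarCoord.target, HasFDerivWithinAt polarCoord.symm (B p) polarCoord.target p :=
    fun p _ => (hasFDerivAt_polarCoord_symm p).hasFDerivWithinAt
  have B_det : ∀ p, (B p).det = p.1 := by
    intro p
    conv_rhs => rw [← one_mul p.1, ← cos_sq_add_sin_sq p.2]
    simp only [B, neg_mul, LinearMap.det_toContinuousLinearMap, LinearMap.det_toLin,
      Matrix.det_fin_two_of, sub_neg_eq_add]
    ring
  symm
  calc
    ∫⁻ p, g p = ∫⁻ p in polarCoord.source, g p := by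
      rw [← setLIntegral_univ]
      exact (setLIntegral_congr polarCoord_source_ae_eq_univ.symm)
    _ = ∫⁻ p in polarCoord.symm '' polarCoord.target, g p := by
      rw [polarCoord.symm_image_target_eq_source]
    _ = ∫⁻ p in polarCoord.target, ENNReal.ofReal |(B p).det| * g (polarCoord.symm p) := by
      apply lintegral_image_eq_lintegral_abs_det_fderiv_mul volume
        polarCoord.open_target.measurableSet A
      rw [← polarCoord.symm_source]
      exact polarCoord.symm.injOn
    _ = ∫⁻ p in polarCoord.target, ENNReal.ofReal p.1 * g (polarCoord.symm p) := by
      apply setLIntegral_congr_fun polarCoord.open_target.measurableSet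
      intro p hp
      dsimp only
      rw [B_det, abs_of_pos hp.1]

lemma arch_hasDerivAt {r : ℝ} (hr : r ∈ Set.Ioo (0:ℝ) 1) :
    HasDerivAt (fun r : ℝ => -Real.sqrt (1 - r ^ 2)) (r / Real.sqrt (1 - r ^ 2)) r := by
  have h1 : (0:ℝ) < 1 - r ^ 2 := by nlinarith [hr.1, hr.2]
  have h2 : HasDerivAt (fun x : ℝ => 1 - x ^ 2) (-(2 * r ^ 1)) r :=
    (hasDerivAt_pow 2 r).const_sub 1
  have h3 := ((Real.hasDerivAt_sqrt h1.ne').comp r h2).neg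
  convert h3 using 1
  · rfl
  · rfl
  · rfl
  have hs : Real.sqrt (1 - r ^ 2) > 0 := Real.sqrt_pos.mpr h1
  have hs' : Real.sqrt (1 - r ^ 2) ≠ 0 := hs.ne'
  field_simp

/-- The Archimedean measure on the unit disk. -/
noncomputable def archMeasure : Measure (ℝ × ℝ) :=
  volume.withDensity fun p =>
    if p.1 ^ 2 + p.2 ^ 2 < 1 then
      ENNReal.ofReal (1 / (2 * π * Real.sqrt (1 - p.1 ^ 2 - p.2 ^ 2))) else 0

/-- If `(X, Y) ~ Arch` and `R = √(X² + Y²)`, then `P(R > k) = √(1 - k²)` for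
every `k ∈ [0, 1]`. -/
theorem arch_radius_survival (k : ℝ) (hk : k ∈ Set.Icc (0 : ℝ) 1) :
    archMeasure {p : ℝ × ℝ | k < Real.sqrt (p.1 ^ 2 + p.2 ^ 2)} =
      ENNReal.ofReal (Real.sqrt (1 - k ^ 2)) := by
  obtain ⟨hk0, hk1⟩ := hk
  set D : ℝ × ℝ → ℝ≥0∞ := fun p =>
    if p.1 ^ 2 + p.2 ^ 2 < 1 then
      ENNReal.ofReal (1 / (2 * π * Real.sqrt (1 - p.1 ^ 2 - p.2 ^ 2))) else 0 with hD
  set S : Set (ℝ × ℝ) := {p : ℝ × ℝ | k < Real.sqrt (p.1 ^ 2 + p.2 ^ 2)} with hS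
  have hSm : MeasurableSet S :=
    measurableSet_lt measurable_const
      ((measurable_fst.pow_const 2).add (measurable_snd.pow_const 2)).sqrt
  have step1 : archMeasure S = ∫⁻ p, S.indicator D p := by
    rw [archMeasure, withDensity_apply _ hSm, ← lintegral_indicator hSm]
  -- the radial profile
  have hint : IntegrableOn (fun r : ℝ => r / Real.sqrt (1 - r ^ 2)) (Ioc k 1) := by
    apply intervalIntegral.integrableOn_deriv_of_nonneg (g := fun r : ℝ => -Real.sqrt (1 - r ^ 2))
    · exact (continuous_const.sub (continuous_pow 2)).sqrt.neg.continuousOn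
    · intro r hr
      exact arch_hasDerivAt ⟨lt_of_le_of_lt hk0 hr.1, hr.2⟩
    · intro r hr
      have : (0:ℝ) < r := lt_of_le_of_lt hk0 hr.1
      positivity
  have hradial : (∫⁻ r in Ioo k 1, ENNReal.ofReal (r / Real.sqrt (1 - r ^ 2)))
      = ENNReal.ofReal (Real.sqrt (1 - k ^ 2)) := by
    rw [← ofReal_integral_eq_lintegral_ofReal (hint.mono_set Ioo_subset_Ioc_self)]
    · congr 1
      rw [← integral_Ioc_eq_integral_Ioo, ← intervalIntegral.integral_of_le hk1]
      rw [intervalIntegral.integral_eq_sub_of_hasDeriv_right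
          (f := fun r : ℝ => -Real.sqrt (1 - r ^ 2))
          (((continuous_const.sub (continuous_pow 2)).sqrt.neg).continuousOn)
          (fun r hr => by
            rw [min_eq_left hk1, max_eq_right hk1] at hr
            exact (arch_hasDerivAt ⟨lt_of_le_of_lt hk0 hr.1, hr.2⟩).hasDerivWithinAt)
          ((intervalIntegrable_iff_integrableOn_Ioc_of_le hk1).mpr hint)]
      norm_num
    · filter_upwards [ae_restrict_mem measurableSet_Ioo] with r hr
      have : (0:ℝ) < r := lt_of_le_of_lt hk0 hr.1
      positivity
  -- polar coordinates
  rw [step1, ← lintegral_comp_polarCoord_symm']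
  have hcongr : ∀ p ∈ polarCoord.target,
      ENNReal.ofReal p.1 * S.indicator D (polarCoord.symm p)
        = (Ioo k 1).indicator (fun r => ENNReal.ofReal (r / Real.sqrt (1 - r ^ 2))) p.1
            * ENNReal.ofReal (1 / (2 * π)) := by
    rintro ⟨r, θ⟩ ⟨hr, hθ⟩
    simp only [mem_Ioi] at hr
    have hsymm : polarCoord.symm (r, θ) = (r * cos θ, r * sin θ) := rfl
    have hsq : (r * cos θ) ^ 2 + (r * sin θ) ^ 2 = r ^ 2 := by
      have := sin_sq_add_cos_sq θ; nlinarith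
    have hsqrt : Real.sqrt ((r * cos θ) ^ 2 + (r * sin θ) ^ 2) = r := by
      rw [hsq, Real.sqrt_sq hr.le]
    by_cases hmem : r ∈ Ioo k 1
    · have h1 : 1 - r ^ 2 > 0 := by nlinarith [hmem.2, hr]
      have hSmem : polarCoord.symm (r, θ) ∈ S := by
        rw [hsymm, hS]; simpa [hsqrt] using hmem.1
      rw [indicator_of_mem hSmem, indicator_of_mem hmem, hsymm, hD]
      simp only [hsq]
      rw [if_pos (by nlinarith)]
      rw [← ENNReal.ofReal_mul hr.le, ← ENNReal.ofReal_mul (by positivity)]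
      have hsp : Real.sqrt (1 - r ^ 2) > 0 := Real.sqrt_pos.mpr h1
      have h2 : 1 - (r * cos θ) ^ 2 - (r * sin θ) ^ 2 = 1 - r ^ 2 := by nlinarith
      rw [h2]
      have h3 : r * (1 / (2 * π * Real.sqrt (1 - r ^ 2)))
          = r / Real.sqrt (1 - r ^ 2) * (1 / (2 * π)) := by
        rw [mul_one_div, div_mul_div_comm, mul_one, mul_comm (Real.sqrt (1 - r ^ 2)) (2 * π)]
      rw [h3]
    · rw [indicator_of_notMem hmem, zero_mul, mul_eq_zero]
      rcases lt_or_ge k r with hkr | hkr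
      · -- then r ≥ 1, so outside disk, D = 0
        have hr1 : (1:ℝ) ≤ r := by
          by_contra h; exact hmem ⟨hkr, lt_of_not_ge h⟩
        right
        rw [hsymm, hD]
        apply Set.indicator_apply_eq_zero.mpr
        intro _
        have hnot : ¬ ((r * cos θ) ^ 2 + (r * sin θ) ^ 2 < 1) := by rw [hsq]; nlinarith
        simp only [hnot, if_false]
      · right
        have : polarCoord.symm (r, θ) ∉ S := by
          rw [hsymm]
          show ¬ k < Real.sqrt ((r * cos θ) ^ 2 + (r * sin θ) ^ 2)
          rw [hsqrt]; exact not_lt.mpr hkr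
        rw [indicator_of_notMem this]
  rw [setLIntegral_congr_fun polarCoord.open_target.measurableSet
    hcongr]
  have htarget : polarCoord.target = Ioi (0:ℝ) ×ˢ Ioo (-π) π := rfl
  rw [htarget]
  rw [lintegral_mul_const' _ _ (by simp)]
  have hprod : (∫⁻ p in (Ioi (0:ℝ)) ×ˢ (Ioo (-π) π),
      (Ioo k 1).indicator (fun r => ENNReal.ofReal (r / Real.sqrt (1 - r ^ 2))) p.1)
      = (∫⁻ r in Ioi (0:ℝ), (Ioo k 1).indicator
          (fun r => ENNReal.ofReal (r / Real.sqrt (1 - r ^ 2))) r) * volume (Ioo (-π) π) := by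
    have hmeas : Measurable ((Ioo k 1).indicator
        (fun r => ENNReal.ofReal (r / Real.sqrt (1 - r ^ 2)))) := by
      apply Measurable.indicator _ measurableSet_Ioo
      exact (measurable_id.div ((measurable_const.sub (measurable_id.pow_const 2)).sqrt)).ennreal_ofReal
    rw [MeasureTheory.Measure.volume_eq_prod, ← Measure.prod_restrict]
    calc ∫⁻ p : ℝ × ℝ, (Ioo k 1).indicator (fun r => ENNReal.ofReal (r / Real.sqrt (1 - r ^ 2))) p.1
          ∂((volume.restrict (Ioi (0:ℝ))).prod (volume.restrict (Ioo (-π) π)))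
        = ∫⁻ p : ℝ × ℝ, (Ioo k 1).indicator (fun r => ENNReal.ofReal (r / Real.sqrt (1 - r ^ 2))) p.1
            * (fun _ : ℝ => (1:ℝ≥0∞)) p.2
          ∂((volume.restrict (Ioi (0:ℝ))).prod (volume.restrict (Ioo (-π) π))) := by
          simp
      _ = _ := by
          rw [lintegral_prod_mul hmeas.aemeasurable aemeasurable_const]
          simp [lintegral_one]
  rw [hprod, lintegral_indicator measurableSet_Ioo,
    Measure.restrict_restrict measurableSet_Ioo]
  have hinter : Ioo k 1 ∩ Ioi (0:ℝ) = Ioo k 1 :=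
    inter_eq_self_of_subset_left (fun r hr => lt_of_le_of_lt hk0 hr.1)
  rw [hinter, hradial, Real.volume_Ioo]
  have h2π : π - -π = 2 * π := by ring
  rw [h2π, ← ENNReal.ofReal_mul (Real.sqrt_nonneg _),
    ← ENNReal.ofReal_mul (mul_nonneg (Real.sqrt_nonneg _) (by positivity))]
  congr 1
  rw [mul_one_div, mul_div_assoc, div_self (by positivity : (2 * π : ℝ) ≠ 0), mul_one]
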